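/- Let I = ℝ or I = [0,∞), let X be a complex Banach space, let (gₙ : I → X)ₙ∈ℕ be a sequence of almost anti-periodic functions, and suppose that (gₙ) converges uniformly on I to a function g : I → X. Then g is almost anti-periodic. -/

import Mathlib

/-- A set `S` of (positive) real numbers is relatively dense. -/
def RelativelyDense (S : Set ℝ) : Prop :=
  ∃ l > 0, ∀ a : ℝ, 0 ≤ a → ∃ τ ∈ S, a ≤ τ ∧ τ ≤ a + l

/-- `f` is almost anti-periodic on `I`. -/
def AlmostAntiPeriodicOn {X : Type*} [NormedAddCommGroup X] (I : Set ℝ) (f : ℝ → X) : Prop :=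
  ∀ ε > 0, RelativelyDense {τ : ℝ | 0 < τ ∧ ∀ t ∈ I, ‖f (t + τ) + f t‖ ≤ ε}

/-- A uniform limit of almost anti-periodic functions is almost anti-periodic. -/
theorem uniform_limit_almostAntiPeriodic
    {X : Type*} [NormedAddCommGroup X] [NormedSpace ℂ X] [CompleteSpace X]
    (I : Set ℝ) (hI : I = Set.univ ∨ I = Set.Ici (0 : ℝ))
    (g : ℕ → ℝ → X) (hcont : ∀ n, ContinuousOn (g n) I)
    (hg : ∀ n, AlmostAntiPeriodicOn I (g n))
    (G : ℝ → X) (hlim : TendstoUniformlyOn g G Filter.atTop I) :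
    AlmostAntiPeriodicOn I G := by
  intro ε hε
  have h3 : (0 : ℝ) < ε / 3 := by linarith
  obtain ⟨n, hn⟩ := (Filter.eventually_atTop.mp
    ((Metric.tendstoUniformlyOn_iff.mp hlim) (ε / 3) h3)).imp (fun n h => h)
  have hnn : ∀ x ∈ I, dist (G x) (g n x) < ε / 3 := hn n le_rfl
  obtain ⟨l, hl, hdense⟩ := hg n (ε / 3) h3
  refine ⟨l, hl, fun a ha => ?_⟩
  obtain ⟨τ, ⟨hτpos, hτ⟩, hle⟩ := hdense a ha
  refine ⟨τ, ⟨hτpos, fun t ht => ?_⟩, hle⟩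
  have htτ : t + τ ∈ I := by
    rcases hI with h | h
    · simp [h]
    · subst h; exact Set.mem_Ici.mpr (le_trans (Set.mem_Ici.mp ht) (by linarith))
  have h1 := hnn t ht
  have h2 := hnn (t + τ) htτ
  have h4 := hτ t ht
  calc ‖G (t + τ) + G t‖
      = ‖(G (t + τ) - g n (t + τ)) + (g n (t + τ) + g n t) + (G t - g n t)‖ := by congr 1; abel
    _ ≤ ‖(G (t + τ) - g n (t + τ)) + (g n (t + τ) + g n t)‖ + ‖G t - g n t‖ := norm_add_le _ _
    _ ≤ ‖G (t + τ) - g n (t + τ)‖ + ‖g n (t + τ) + g n t‖ + ‖G t - g n t‖ := by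
        gcongr; exact norm_add_le _ _
    _ ≤ ε := by
        rw [dist_eq_norm] at h1 h2
        linarith
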